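/- For every k ≥ 1, the twelve strings t_4(k) = b·TM_{2k}, t_5(k) = b·TM_{2k}·TM_{2k-1}·complement(TM_{2k-2})', t_6(k) = b·TM_{2k}·TM_{2k+1}', t_7(k) = b·TM_{2k}·TM_{2k+1}, t_8(k) = b·TM_{2k}·TM_{2k+1}·complement(TM_{2k})', t_11(k) = b·TM_{2k}·TM_{2k+1}·complement(TM_{2k+2})', t_1(k) = b·TM_{2k+1}', t_2(k) = b·TM_{2k+1}, t_9(k) = b·TM_{2k}·complement(TM_{2k+2})', t_10(k) = b·TM_{2k}·complement(TM_{2k+2}), t_12(k) = b·TM_{2k}·complement(TM_{2k+2})·complement(TM_{2k+2})', t_3(k) = b·TM_{2k+1}·complement(TM_{2k})' satisfy the strict lexicographic chain t_4(k) ≺ t_5(k) ≺ t_6(k) ≺ t_7(k) ≺ t_8(k) ≺ t_11(k) ≺ t_1(k) ≺ t_2(k) ≺ t_9(k) ≺ t_10(k) ≺ t_12(k) ≺ t_3(k). -/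

import Mathlib

/-- Alphabet {a,b} with a = false, b = true, a < b. -/
abbrev Letter := Bool

/-- Lexicographic order (proper prefixes are smaller). -/
def lexlt (x y : List Bool) : Prop := List.Lex (· < ·) x y

/-- Fibonacci words: F 0 = b, F 1 = a, F (k+2) = F (k+1) ++ F k. -/
def Fib : ℕ → List Bool
  | 0 => [true]
  | 1 => [false]
  | (k+2) => Fib (k+1) ++ Fib k

/-- bitwise complement -/
def comp (w : List Bool) : List Bool := w.map (fun c => !c)

/-- Thue-Morse words: TM 0 = a, TM (k+1) = TM k ++ comp (TM k). -/
def TM : ℕ → List Bool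
  | 0 => [false]
  | (k+1) => TM k ++ comp (TM k)

/-- Fueled Nyldon predicate: a string of length 1 is Nyldon; a longer string is
Nyldon iff it admits no factorization into ≥ 2 Nyldon words in lexicographically
non-decreasing order. -/
def NyldonAux : ℕ → List Bool → Prop
  | 0, _ => False
  | (n+1), w =>
    w.length = 1 ∨ (1 < w.length ∧
      ¬ ∃ fs : List (List Bool), 2 ≤ fs.length ∧ fs.flatten = w ∧
        fs.Chain' lexlt ∧ ∀ u ∈ fs, NyldonAux n u)

def Nyldon (w : List Bool) : Prop := NyldonAux w.length w

/-- H k = Fib k with its first letter removed. -/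
def H (k : ℕ) : List Bool := (Fib k).tail

/-- s is the longest Nyldon proper suffix of w. -/
def IsLnps (w s : List Bool) : Prop :=
  s <:+ w ∧ s ≠ w ∧ Nyldon s ∧
    ∀ t : List Bool, t <:+ w → t ≠ w → Nyldon t → t.length ≤ s.length

/-- Thue-Morse morphism: τ(a)=ab, τ(b)=ba. -/
def tau (w : List Bool) : List Bool :=
  w.flatMap (fun c => if c then [true, false] else [false, true])

/-- The sequence w_n: w_1=a, w_2=b, w_3=ba, w_4=baabbaa,
w_n = b·TM_{2n-8}·comp(TM_{2n-6})·comp(TM_{2n-6})' for n ≥ 5. -/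
def wseq : ℕ → List Bool
  | 0 => []
  | 1 => [false]
  | 2 => [true]
  | 3 => [true, false]
  | 4 => [true, false, false, true, true, false, false]
  | (n+5) => true :: (TM (2*n+2) ++ comp (TM (2*n+4)) ++ (comp (TM (2*n+4))).dropLast)

/-- The twelve words t_i(k). -/
def tword : ℕ → ℕ → List Bool
  | 1, k => true :: (TM (2*k+1)).dropLast
  | 2, k => true :: TM (2*k+1)
  | 3, k => true :: (TM (2*k+1) ++ (comp (TM (2*k))).dropLast)
  | 4, k => true :: TM (2*k)
  | 5, k => true :: (TM (2*k) ++ TM (2*k-1) ++ (comp (TM (2*k-2))).dropLast)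
  | 6, k => true :: (TM (2*k) ++ (TM (2*k+1)).dropLast)
  | 7, k => true :: (TM (2*k) ++ TM (2*k+1))
  | 8, k => true :: (TM (2*k) ++ TM (2*k+1) ++ (comp (TM (2*k))).dropLast)
  | 9, k => true :: (TM (2*k) ++ (comp (TM (2*k+2))).dropLast)
  | 10, k => true :: (TM (2*k) ++ comp (TM (2*k+2)))
  | 11, k => true :: (TM (2*k) ++ TM (2*k+1) ++ (comp (TM (2*k+2))).dropLast)
  | 12, k => true :: (TM (2*k) ++ comp (TM (2*k+2)) ++ (comp (TM (2*k+2))).dropLast)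
  | _, _ => []

/- Auxiliary lemmas -/

lemma lexlt_append (u v : List Bool) (h : v ≠ []) : lexlt u (u ++ v) := by
  induction u with
  | nil =>
    cases v with
    | nil => exact absurd rfl h
    | cons a t => exact List.Lex.nil
  | cons a t ih => exact List.Lex.cons ih

lemma lexlt_mid (u x y : List Bool) : lexlt (u ++ false :: x) (u ++ true :: y) := by
  induction u with
  | nil => exact List.Lex.rel (by decide)
  | cons a t ih => exact List.Lex.cons ih

lemma lexlt_pre {w₁ w₂ : List Bool} (v : List Bool) (h : v ≠ []) (h2 : w₂ = w₁ ++ v) :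
    lexlt w₁ w₂ := h2 ▸ lexlt_append w₁ v h

lemma lexlt_mid' {w₁ w₂ : List Bool} (u x y : List Bool)
    (h1 : w₁ = u ++ false :: x) (h2 : w₂ = u ++ true :: y) : lexlt w₁ w₂ := by
  rw [h1, h2]; exact lexlt_mid u x y

lemma comp_append (u v : List Bool) : comp (u ++ v) = comp u ++ comp v := by
  simp [comp]

lemma comp_comp (u : List Bool) : comp (comp u) = u := by
  induction u with
  | nil => rfl
  | cons a t ih => simp [comp] at ih ⊢; exact ih

lemma comp_cons (b : Bool) (t : List Bool) : comp (b :: t) = (!b) :: comp t := rfl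

lemma TM_succ (n : ℕ) : TM (n+1) = TM n ++ comp (TM n) := rfl

lemma TM_ne (n : ℕ) : TM n ≠ [] := by
  induction n with
  | zero => simp [TM]
  | succ n ih => simp [TM_succ, ih]

lemma comp_ne {l : List Bool} (h : l ≠ []) : comp l ≠ [] := by
  cases l with
  | nil => exact absurd rfl h
  | cons a t => simp [comp]

lemma TM_cons (n : ℕ) : ∃ t, TM n = false :: t := by
  induction n with
  | zero => exact ⟨[], rfl⟩
  | succ n ih => obtain ⟨t, ht⟩ := ih; exact ⟨t ++ comp (TM n), by rw [TM_succ, ht]; rfl⟩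

lemma TM1_cons (n : ℕ) : ∃ t, TM (n+1) = false :: t ∧ t ≠ [] := by
  obtain ⟨t, ht⟩ := TM_cons n
  refine ⟨t ++ comp (TM n), by rw [TM_succ, ht]; rfl, ?_⟩
  intro h
  exact comp_ne (TM_ne n) (List.append_eq_nil_iff.mp h).2

lemma concat_decomp {l : List Bool} (h : l ≠ []) : ∃ D g, l = D ++ [g] ∧ D = l.dropLast := by
  obtain ⟨D, g, h2⟩ := List.eq_nil_or_concat l |>.resolve_left h
  exact ⟨D, g, by simpa [List.concat_eq_append] using h2, by simp [h2, List.concat_eq_append]⟩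

theorem stmt18 : ∀ k : ℕ, 1 ≤ k →
    lexlt (tword 4 k) (tword 5 k) ∧ lexlt (tword 5 k) (tword 6 k) ∧
    lexlt (tword 6 k) (tword 7 k) ∧ lexlt (tword 7 k) (tword 8 k) ∧
    lexlt (tword 8 k) (tword 11 k) ∧ lexlt (tword 11 k) (tword 1 k) ∧
    lexlt (tword 1 k) (tword 2 k) ∧ lexlt (tword 2 k) (tword 9 k) ∧
    lexlt (tword 9 k) (tword 10 k) ∧ lexlt (tword 10 k) (tword 12 k) ∧
    lexlt (tword 12 k) (tword 3 k) := by
  intro k hk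
  obtain ⟨m, rfl⟩ : ∃ m, k = m + 1 := ⟨k - 1, by omega⟩
  have i1 : 2*(m+1)-1 = 2*m+1 := by omega
  have i2 : 2*(m+1)-2 = 2*m := by omega
  have i3 : 2*(m+1)+2 = 2*(m+1)+1+1 := by omega
  have hA1 : TM (2*(m+1)+1) = TM (2*(m+1)) ++ comp (TM (2*(m+1))) := TM_succ _
  have hBne : comp (TM (2*(m+1))) ≠ [] := comp_ne (TM_ne _)
  obtain ⟨s, hs, hsne⟩ := TM1_cons (2*m+1)
  have hAcons : TM (2*(m+1)) = false :: s := by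
    rw [show 2*(m+1) = 2*m+1+1 from by omega, hs]
  obtain ⟨cs, g2, hcs, -⟩ := concat_decomp (comp_ne hsne)
  have hB : comp (TM (2*(m+1))) = true :: (cs ++ [g2]) := by
    rw [hAcons, comp_cons, hcs]; simp
  have hBd : (comp (TM (2*(m+1)))).dropLast = true :: cs := by
    rw [hB, ← List.cons_append, List.dropLast_concat]
  have hT1d : (TM (2*(m+1)+1)).dropLast
      = TM (2*(m+1)) ++ (comp (TM (2*(m+1)))).dropLast := by
    rw [hA1, List.dropLast_append_of_ne_nil hBne]
  have hcompP : comp (TM (2*m+1)) = comp (TM (2*m)) ++ TM (2*m) := by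
    rw [TM_succ, comp_append, comp_comp]
  have hA2 : TM (2*(m+1)) = TM (2*m+1) ++ (comp (TM (2*m)) ++ TM (2*m)) := by
    rw [show 2*(m+1) = (2*m+1)+1 from by omega, TM_succ, hcompP]
  have hC : comp (TM (2*(m+1)+2))
      = comp (TM (2*(m+1))) ++ (TM (2*(m+1)) ++ (TM (2*(m+1)) ++ comp (TM (2*(m+1))))) := by
    rw [i3, TM_succ, comp_append, comp_comp, hA1, comp_append, comp_comp, List.append_assoc]
  have hCne : comp (TM (2*(m+1)+2)) ≠ [] := comp_ne (TM_ne _)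
  have hCd : (comp (TM (2*(m+1)+2))).dropLast
      = comp (TM (2*(m+1))) ++ (TM (2*(m+1)) ++ (TM (2*(m+1)) ++ (comp (TM (2*(m+1)))).dropLast)) := by
    rw [hC, List.dropLast_append_of_ne_nil, List.dropLast_append_of_ne_nil,
      List.dropLast_append_of_ne_nil hBne]
    · simp [List.append_eq_nil_iff, hBne, TM_ne]
    · simp [List.append_eq_nil_iff, hBne, TM_ne]
  obtain ⟨T1d, gT, hT1s, hT1dd⟩ := concat_decomp (TM_ne (2*(m+1)+1))
  obtain ⟨Cd, gC, hCs, hCdd⟩ := concat_decomp hCne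
  obtain ⟨D, g, hE, hDdd⟩ := concat_decomp (comp_ne (TM_ne (2*m)))
  refine ⟨?_, ?_, ?_, ?_, ?_, ?_, ?_, ?_, ?_, ?_, ?_⟩
  · -- t4 ≺ t5
    refine lexlt_pre (TM (2*m+1) ++ (comp (TM (2*m))).dropLast)
      (by simp [List.append_eq_nil_iff, TM_ne]) ?_
    simp only [tword]; rw [i1, i2]; simp [List.append_assoc]
  · -- t5 ≺ t6
    refine lexlt_pre ([g] ++ (TM (2*m) ++ (comp (TM (2*(m+1)))).dropLast)) (by simp) ?_
    simp only [tword]; rw [i1, i2, hT1d, ← hDdd, hA2, hE]; simp [List.append_assoc]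
  · -- t6 ≺ t7
    refine lexlt_pre [gT] (by simp) ?_
    simp only [tword]; rw [← hT1dd, hT1s]; simp [List.append_assoc]
  · -- t7 ≺ t8
    refine lexlt_pre ((comp (TM (2*(m+1)))).dropLast) (by rw [hBd]; simp) ?_
    simp only [tword]; simp [List.append_assoc]
  · -- t8 ≺ t11
    refine lexlt_pre ([g2] ++ (TM (2*(m+1)) ++ (TM (2*(m+1))
      ++ (comp (TM (2*(m+1)))).dropLast))) (by simp) ?_
    simp only [tword]; rw [hCd, hBd, hB]; simp [List.append_assoc]
  · -- t11 ≺ t1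
    refine lexlt_mid' (true :: TM (2*(m+1)))
      (s ++ (comp (TM (2*(m+1))) ++ (comp (TM (2*(m+1)+2))).dropLast)) cs ?_ ?_
    · simp only [tword]; rw [hA1, hAcons]; simp [List.append_assoc]
    · simp only [tword]; rw [hT1d, hBd]; simp [List.append_assoc]
  · -- t1 ≺ t2
    refine lexlt_pre [gT] (by simp) ?_
    simp only [tword]; rw [← hT1dd, hT1s]; simp [List.append_assoc]
  · -- t2 ≺ t9
    refine lexlt_pre (TM (2*(m+1)) ++ (TM (2*(m+1)) ++ (comp (TM (2*(m+1)))).dropLast))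
      (by simp [List.append_eq_nil_iff, TM_ne]) ?_
    simp only [tword]; rw [hCd, hA1]; simp [List.append_assoc]
  · -- t9 ≺ t10
    refine lexlt_pre [gC] (by simp) ?_
    simp only [tword]; rw [← hCdd, hCs]; simp [List.append_assoc]
  · -- t10 ≺ t12
    refine lexlt_pre ((comp (TM (2*(m+1)+2))).dropLast)
      (by rw [hCd]; simp [List.append_eq_nil_iff, hBne]) ?_
    simp only [tword]; simp [List.append_assoc]
  · -- t12 ≺ t3
    refine lexlt_mid' (true :: (TM (2*(m+1)) ++ comp (TM (2*(m+1)))))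
      (s ++ (TM (2*(m+1)) ++ (comp (TM (2*(m+1)))
        ++ (comp (TM (2*(m+1)+2))).dropLast))) cs ?_ ?_
    · simp only [tword]; rw [hC, hAcons]; simp [List.append_assoc]
    · simp only [tword]; rw [hA1, hBd]; simp [List.append_assoc]
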